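/- arXiv:2009.09264 — 4 statements merged into one kernel-verified Lean document; each statement's English description precedes it below -/
import Mathlib

section
/- Let f ∈ F₁(a,b) with a ≥ 0, let P be a probability measure on a measurable space (Ω,M), let φ : Ω → ℝ be measurable with φ ∈ L¹(P) and suppose there exist c₊, c₋ > 0 and ν₊, ν₋ ∈ ℝ such that E_P[(f*(c₊φ − ν₊))⁺] < ∞ and E_P[(f*(−c₋φ − ν₋))⁺] < ∞. Then φ ∈ L¹(Q) for every probability measure Q on (Ω,M) with D_f(Q,P) < ∞. -/
open MeasureTheory Filter Set
open scoped ENNReal NNReal Classical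

/-- The positive part of an extended real number, as an element of `ℝ≥0∞`. -/
noncomputable def erealPos (x : EReal) : ℝ≥0∞ := if x = ⊤ then ⊤ else ENNReal.ofReal x.toReal

/-- Extended expectation of an `EReal`-valued function, with the convention `∞ - ∞ = ∞`. -/
noncomputable def feexp {Ω : Type*} [MeasurableSpace Ω] (P : Measure Ω) (g : Ω → EReal) : EReal :=
  if ∫⁻ x, erealPos (g x) ∂P = ⊤ then ⊤
  else ((∫⁻ x, erealPos (g x) ∂P).toReal : EReal) - ((∫⁻ x, erealPos (-(g x)) ∂P : ℝ≥0∞) : EReal)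

/-- The extension of a convex function `f : (a,b) → ℝ` to a convex, lower semicontinuous
function `ℝ → (-∞,∞]`, taking the limiting values at finite endpoints and `∞` outside `[a,b]`. -/
noncomputable def fExt (a b : EReal) (f : ℝ → ℝ) (x : ℝ) : EReal :=
  if a < (x : EReal) ∧ (x : EReal) < b then (f x : EReal)
  else if (x : EReal) = a then limsup (fun t : ℝ => (f t : EReal)) (nhdsWithin x (Ioi x))
  else if (x : EReal) = b then limsup (fun t : ℝ => (f t : EReal)) (nhdsWithin x (Iio x))
  else ⊤

/-- The `f`-divergence `D_f(Q,P) = E_P[f(dQ/dP)]` for `Q ≪ P`, and `∞` otherwise. -/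
noncomputable def fDivg {Ω : Type*} [MeasurableSpace Ω] (a b : EReal) (f : ℝ → ℝ)
    (Q P : Measure Ω) : EReal :=
  if Q ≪ P then feexp P (fun x => fExt a b f ((Q.rnDeriv P) x).toReal) else ⊤

/-- The Legendre transform `f*(y) = sup_{x ∈ (a,b)} {x y - f x}`. -/
noncomputable def legT (a b : EReal) (f : ℝ → ℝ) (y : ℝ) : EReal :=
  ⨆ x : {t : ℝ // a < (t : EReal) ∧ (t : EReal) < b}, ((x.1 * y - f x.1 : ℝ) : EReal)

lemma erealPos_coe (z : ℝ) : erealPos (z : EReal) = ENNReal.ofReal z := by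
  simp [erealPos]

lemma erealPos_mono : Monotone erealPos := by
  intro u v huv
  unfold erealPos
  rcases eq_or_ne v ⊤ with hv | hv
  · simp [hv]
  · rw [if_neg hv, if_neg (fun h : u = ⊤ => hv (top_le_iff.1 (h ▸ huv)))]
    rcases eq_or_ne u ⊥ with hu | hu
    · simp [hu]
    · exact ENNReal.ofReal_le_ofReal (EReal.toReal_le_toReal huv hu hv)

lemma erealPos_add_le (u v : EReal) : erealPos (u + v) ≤ erealPos u + erealPos v := by
  induction u with
  | bot => simp [erealPos]
  | coe x =>
    induction v with
    | bot => simp [erealPos]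
    | coe y =>
      rw [← EReal.coe_add, erealPos_coe, erealPos_coe, erealPos_coe]
      exact ENNReal.ofReal_add_le
    | top => simp [erealPos]
  | top =>
    induction v with
    | bot => simp [erealPos]
    | coe y => simp [erealPos, EReal.top_add_of_ne_bot (EReal.coe_ne_bot y)]
    | top => simp [erealPos]

lemma measurable_erealPos : Measurable erealPos := by
  unfold erealPos
  exact Measurable.ite (measurableSet_eq) measurable_const
    (ENNReal.measurable_ofReal.comp measurable_ereal_toReal)

lemma ofReal_max_zero (z : ℝ) : ENNReal.ofReal (max z 0) = ENNReal.ofReal z := by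
  rcases le_total z 0 with h | h
  · simp [max_eq_right h, ENNReal.ofReal_of_nonpos h]
  · simp [max_eq_left h]

lemma limsup_coe_ge {F : Filter ℝ} [F.NeBot] {f g : ℝ → ℝ} {c : ℝ}
    (hg : Tendsto g F (nhds c)) (h : ∀ᶠ t in F, g t ≤ f t) :
    (c : EReal) ≤ limsup (fun t => (f t : EReal)) F := by
  have h1 : limsup (fun t => (g t : EReal)) F = (c : EReal) :=
    ((continuous_coe_real_ereal.tendsto c).comp hg).limsup_eq
  rw [← h1]
  exact limsup_le_limsup (h.mono fun t ht => EReal.coe_le_coe_iff.2 ht)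
variable {a b : EReal} {f : ℝ → ℝ}

lemma le_legT {t : ℝ} (ht : a < (t : EReal) ∧ (t : EReal) < b) (y : ℝ) :
    ((t * y - f t : ℝ) : EReal) ≤ legT a b f y :=
  le_iSup (fun x : {t : ℝ // a < (t : EReal) ∧ (t : EReal) < b} =>
    ((x.1 * y - f x.1 : ℝ) : EReal)) ⟨t, ht⟩

lemma one_mem (ha1 : a < 1) (hb1 : (1 : EReal) < b) :
    a < ((1 : ℝ) : EReal) ∧ ((1 : ℝ) : EReal) < b := by
  constructor <;> simpa using ‹_›

lemma coe_le_legT (ha1 : a < 1) (hb1 : (1 : EReal) < b) (hf1 : f 1 = 0) (y : ℝ) :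
    (y : EReal) ≤ legT a b f y := by
  have := le_legT (f := f) (one_mem ha1 hb1) y
  simpa [hf1] using this

lemma legT_ne_bot (ha1 : a < 1) (hb1 : (1 : EReal) < b) (hf1 : f 1 = 0) (y : ℝ) :
    legT a b f y ≠ ⊥ := by
  intro h
  have := coe_le_legT ha1 hb1 hf1 y
  rw [h, le_bot_iff] at this
  exact EReal.coe_ne_bot y this

lemma measurable_legT : Measurable (legT a b f) := by
  have : LowerSemicontinuous (legT a b f) := by
    apply lowerSemicontinuous_iSup
    intro x
    exact (continuous_coe_real_ereal.comp (by continuity)).lowerSemicontinuous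
  exact this.measurable

lemma young (ha1 : a < 1) (hb1 : (1 : EReal) < b)
    (hf : ConvexOn ℝ {t : ℝ | a < (t : EReal) ∧ (t : EReal) < b} f)
    (hf1 : f 1 = 0) (r y : ℝ) :
    ((r * y : ℝ) : EReal) ≤ fExt a b f r + legT a b f y := by
  have h1S : (1 : ℝ) ∈ {t : ℝ | a < (t : EReal) ∧ (t : EReal) < b} := one_mem ha1 hb1
  have hLne : legT a b f y ≠ ⊥ := legT_ne_bot ha1 hb1 hf1 y
  by_cases hr : a < (r : EReal) ∧ (r : EReal) < b
  · rw [fExt, if_pos hr]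
    have h2 : ((r * y - f r : ℝ) : EReal) ≤ legT a b f y := le_legT hr y
    calc ((r * y : ℝ) : EReal) = (f r : EReal) + ((r * y - f r : ℝ) : EReal) := by
          rw [← EReal.coe_add]; norm_num
      _ ≤ _ := add_le_add_right h2 _
  · rw [fExt, if_neg hr]
    by_cases hra : (r : EReal) = a
    · rw [if_pos hra]
      -- endpoint a
      have hr1 : r < 1 := by
        have : (r : EReal) < ((1 : ℝ) : EReal) := by rw [hra]; simpa using ha1
        exact_mod_cast this
      set t₀ : ℝ := (r + 1) / 2 with ht₀
      have hrt₀ : r < t₀ := by rw [ht₀]; linarith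
      have ht₀1 : t₀ < 1 := by rw [ht₀]; linarith
      have ht₀S : t₀ ∈ {t : ℝ | a < (t : EReal) ∧ (t : EReal) < b} := by
        refine ⟨by rw [← hra]; exact_mod_cast hrt₀, ?_⟩
        exact lt_trans (by exact_mod_cast ht₀1 : (t₀ : EReal) < ((1:ℝ) : EReal)) (by simpa using hb1)
      have hev : ∀ᶠ t in nhdsWithin r (Ioi r), r < t ∧ t < t₀ := by
        filter_upwards [self_mem_nhdsWithin,
          nhdsWithin_le_nhds (Iio_mem_nhds hrt₀)] with t h1 h2
        exact ⟨h1, h2⟩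
      have htS : ∀ t : ℝ, r < t → t < t₀ → t ∈ {t : ℝ | a < (t : EReal) ∧ (t : EReal) < b} := by
        intro t h1 h2
        refine ⟨by rw [← hra]; exact_mod_cast h1, ?_⟩
        exact lt_trans (by exact_mod_cast (h2.trans ht₀1) : (t : EReal) < ((1:ℝ) : EReal))
          (by simpa using hb1)
      rcases eq_or_ne (legT a b f y) ⊤ with hL | hL
      · -- need limsup ≠ ⊥ via affine bound
        set s : ℝ := (f 1 - f t₀) / (1 - t₀) with hs
        have hbound : ∀ᶠ t in nhdsWithin r (Ioi r), f t₀ + s * (t - t₀) ≤ f t := by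
          filter_upwards [hev] with t ⟨h1, h2⟩
          have hslope := hf.slope_mono_adjacent (htS t h1 h2) h1S h2 ht₀1
          rw [div_le_div_iff₀ (by linarith) (by linarith)] at hslope
          rw [hs, div_mul_eq_mul_div, ← le_sub_iff_add_le',
            div_le_iff₀ (by linarith : (0:ℝ) < 1 - t₀)]
          linarith
        have htend : Tendsto (fun t : ℝ => f t₀ + s * (t - t₀)) (nhdsWithin r (Ioi r))
            (nhds (f t₀ + s * (r - t₀))) :=
          ((continuous_const.add ((continuous_const.mul (continuous_id.sub continuous_const)))).tendsto r).mono_left nhdsWithin_le_nhds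
        have hge := limsup_coe_ge htend hbound
        rw [hL, EReal.add_top_of_ne_bot (fun h => EReal.coe_ne_bot _ (le_bot_iff.1 (h ▸ hge)))]
        exact le_top
      · -- legT finite
        set L : ℝ := (legT a b f y).toReal with hLdef
        have hLcoe : (L : EReal) = legT a b f y := EReal.coe_toReal hL hLne
        have hbound : ∀ᶠ t in nhdsWithin r (Ioi r), t * y - L ≤ f t := by
          filter_upwards [hev] with t ⟨h1, h2⟩
          have := le_legT (f := f) (htS t h1 h2) y
          rw [← hLcoe] at this
          have h3 : t * y - f t ≤ L := by exact_mod_cast this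
          linarith
        have htend : Tendsto (fun t : ℝ => t * y - L) (nhdsWithin r (Ioi r))
            (nhds (r * y - L)) :=
          (((continuous_id.mul continuous_const).sub continuous_const).tendsto r).mono_left nhdsWithin_le_nhds
        have hge := limsup_coe_ge htend hbound
        calc ((r * y : ℝ) : EReal) = ((r * y - L : ℝ) : EReal) + (L : EReal) := by
              rw [← EReal.coe_add]; norm_num
          _ ≤ limsup (fun t : ℝ => (f t : EReal)) (nhdsWithin r (Ioi r)) + legT a b f y := by
              rw [← hLcoe]; exact add_le_add_left hge _
    · rw [if_neg hra]
      by_cases hrb : (r : EReal) = b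
      · rw [if_pos hrb]
        -- endpoint b
        have hr1 : 1 < r := by
          have : ((1 : ℝ) : EReal) < (r : EReal) := by rw [hrb]; simpa using hb1
          exact_mod_cast this
        set t₁ : ℝ := (1 + r) / 2 with ht₁
        have h1t₁ : 1 < t₁ := by rw [ht₁]; linarith
        have ht₁r : t₁ < r := by rw [ht₁]; linarith
        have ht₁S : t₁ ∈ {t : ℝ | a < (t : EReal) ∧ (t : EReal) < b} := by
          refine ⟨lt_trans (by simpa using ha1) (by exact_mod_cast h1t₁ : ((1:ℝ) : EReal) < (t₁ : EReal)), ?_⟩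
          rw [← hrb]; exact_mod_cast ht₁r
        have hev : ∀ᶠ t in nhdsWithin r (Iio r), t₁ < t ∧ t < r := by
          filter_upwards [self_mem_nhdsWithin,
            nhdsWithin_le_nhds (Ioi_mem_nhds ht₁r)] with t h1 h2
          exact ⟨h2, h1⟩
        have htS : ∀ t : ℝ, t₁ < t → t < r → t ∈ {t : ℝ | a < (t : EReal) ∧ (t : EReal) < b} := by
          intro t h1 h2
          refine ⟨lt_trans (by simpa using ha1)
            (by exact_mod_cast h1t₁.trans h1 : ((1:ℝ) : EReal) < (t : EReal)), ?_⟩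
          rw [← hrb]; exact_mod_cast h2
        rcases eq_or_ne (legT a b f y) ⊤ with hL | hL
        · set s : ℝ := (f t₁ - f 1) / (t₁ - 1) with hs
          have hbound : ∀ᶠ t in nhdsWithin r (Iio r), f t₁ + s * (t - t₁) ≤ f t := by
            filter_upwards [hev] with t ⟨h1, h2⟩
            have hslope := hf.slope_mono_adjacent h1S (htS t h1 h2) h1t₁ h1
            rw [div_le_div_iff₀ (by linarith) (by linarith)] at hslope
            rw [hs, div_mul_eq_mul_div, ← le_sub_iff_add_le',
              div_le_iff₀ (by linarith : (0:ℝ) < t₁ - 1)]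
            linarith
          have htend : Tendsto (fun t : ℝ => f t₁ + s * (t - t₁)) (nhdsWithin r (Iio r))
              (nhds (f t₁ + s * (r - t₁))) :=
            ((continuous_const.add ((continuous_const.mul (continuous_id.sub continuous_const)))).tendsto r).mono_left nhdsWithin_le_nhds
          have hge := limsup_coe_ge htend hbound
          rw [hL, EReal.add_top_of_ne_bot (fun h => EReal.coe_ne_bot _ (le_bot_iff.1 (h ▸ hge)))]
          exact le_top
        · set L : ℝ := (legT a b f y).toReal with hLdef
          have hLcoe : (L : EReal) = legT a b f y := EReal.coe_toReal hL hLne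
          have hbound : ∀ᶠ t in nhdsWithin r (Iio r), t * y - L ≤ f t := by
            filter_upwards [hev] with t ⟨h1, h2⟩
            have := le_legT (f := f) (htS t h1 h2) y
            rw [← hLcoe] at this
            have h3 : t * y - f t ≤ L := by exact_mod_cast this
            linarith
          have htend : Tendsto (fun t : ℝ => t * y - L) (nhdsWithin r (Iio r))
              (nhds (r * y - L)) :=
            (((continuous_id.mul continuous_const).sub continuous_const).tendsto r).mono_left nhdsWithin_le_nhds
          have hge := limsup_coe_ge htend hbound
          calc ((r * y : ℝ) : EReal) = ((r * y - L : ℝ) : EReal) + (L : EReal) := by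
                rw [← EReal.coe_add]; norm_num
            _ ≤ limsup (fun t : ℝ => (f t : EReal)) (nhdsWithin r (Iio r)) + legT a b f y := by
                rw [← hLcoe]; exact add_le_add_left hge _
      · rw [if_neg hrb, EReal.top_add_of_ne_bot hLne]
        exact le_top

/-- For `f ∈ F₁(a,b)` with `a ≥ 0`, a probability measure `P`, and `φ ∈ L¹(P)` satisfying
the two-sided integrability condition on `f*`, one has `φ ∈ L¹(Q)` for every probability
measure `Q` with `D_f(Q,P) < ∞`. -/
theorem integrable_of_fDiv_lt_top {Ω : Type*} [MeasurableSpace Ω]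
    {a b : EReal} (ha : 0 ≤ a) (ha1 : a < 1) (hb1 : (1 : EReal) < b)
    {f : ℝ → ℝ} (hf : ConvexOn ℝ {t : ℝ | a < (t : EReal) ∧ (t : EReal) < b} f)
    (hf1 : f 1 = 0)
    (P : Measure Ω) [IsProbabilityMeasure P]
    {φ : Ω → ℝ} (hφm : Measurable φ) (hφ1 : Integrable φ P)
    {cp cm : ℝ} (hcp : 0 < cp) (hcm : 0 < cm) (νp νm : ℝ)
    (hintp : ∫⁻ x, erealPos (legT a b f (cp * φ x - νp)) ∂P < ⊤)
    (hintm : ∫⁻ x, erealPos (legT a b f (-cm * φ x - νm)) ∂P < ⊤) :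
    ∀ Q : Measure Ω, IsProbabilityMeasure Q → fDivg a b f Q P < ⊤ → Integrable φ Q := by
  intro Q hQprob hQ
  by_cases hQP : Q ≪ P
  case neg => rw [fDivg, if_neg hQP] at hQ; exact absurd hQ (lt_irrefl _)
  rw [fDivg, if_pos hQP, feexp] at hQ
  set r := Q.rnDeriv P with hrdef
  have hI : ∫⁻ x, erealPos (fExt a b f (r x).toReal) ∂P ≠ ⊤ := by
    intro h; rw [if_pos h] at hQ; exact absurd hQ (lt_irrefl _)
  have hrm : Measurable r := Measure.measurable_rnDeriv Q P
  -- key bound for generic (c, ν)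
  have key : ∀ c ν : ℝ, (∫⁻ x, erealPos (legT a b f (c * φ x - ν)) ∂P < ⊤) →
      ∫⁻ x, r x * ENNReal.ofReal (c * φ x - ν) ∂P < ⊤ := by
    intro c ν hint
    have hmeasB : Measurable fun x => erealPos (legT a b f (c * φ x - ν)) :=
      measurable_erealPos.comp
        (measurable_legT.comp ((measurable_const.mul hφm).sub measurable_const))
    have hb : ∀ᵐ x ∂P, r x * ENNReal.ofReal (c * φ x - ν)
        ≤ erealPos (fExt a b f (r x).toReal) + erealPos (legT a b f (c * φ x - ν)) := by
      filter_upwards [Measure.rnDeriv_lt_top Q P] with x hx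
      have h0 : r x * ENNReal.ofReal (c * φ x - ν)
          = erealPos (((r x).toReal * (c * φ x - ν) : ℝ) : EReal) := by
        rw [erealPos_coe, ENNReal.ofReal_mul ENNReal.toReal_nonneg,
          ENNReal.ofReal_toReal hx.ne]
      rw [h0]
      exact le_trans (erealPos_mono (young ha1 hb1 hf hf1 _ _)) (erealPos_add_le _ _)
    calc ∫⁻ x, r x * ENNReal.ofReal (c * φ x - ν) ∂P
        ≤ ∫⁻ x, (erealPos (fExt a b f (r x).toReal)
            + erealPos (legT a b f (c * φ x - ν))) ∂P := lintegral_mono_ae hb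
      _ = ∫⁻ x, erealPos (fExt a b f (r x).toReal) ∂P
            + ∫⁻ x, erealPos (legT a b f (c * φ x - ν)) ∂P := lintegral_add_right _ hmeasB
      _ < ⊤ := ENNReal.add_lt_top.2 ⟨hI.lt_top, hint⟩
  have hp := key cp νp hintp
  have hm := key (-cm) νm (by simpa using hintm)
  refine ⟨hφm.aestronglyMeasurable, ?_⟩
  rw [HasFiniteIntegral]
  have heq : ∫⁻ x, ‖φ x‖ₑ ∂Q = ∫⁻ x, r x * ENNReal.ofReal |φ x| ∂P := by
    simp_rw [Real.enorm_eq_ofReal_abs]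
    exact (MeasureTheory.lintegral_rnDeriv_mul hQP
      (hφm.abs.ennreal_ofReal.aemeasurable)).symm
  rw [heq]
  set K : ℝ := cp⁻¹ * |νp| + cm⁻¹ * |νm| with hK
  have hpt : ∀ x, r x * ENNReal.ofReal |φ x|
      ≤ ENNReal.ofReal cp⁻¹ * (r x * ENNReal.ofReal (cp * φ x - νp))
        + ENNReal.ofReal cm⁻¹ * (r x * ENNReal.ofReal (-cm * φ x - νm))
        + ENNReal.ofReal K * r x := by
    intro x
    set M1 : ℝ := max (cp * φ x - νp) 0 with hM1
    set M2 : ℝ := max (-cm * φ x - νm) 0 with hM2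
    have h1 : cp * φ x - νp ≤ M1 := le_max_left _ _
    have h1' : (0:ℝ) ≤ M1 := le_max_right _ _
    have h2 : -cm * φ x - νm ≤ M2 := le_max_left _ _
    have h2' : (0:ℝ) ≤ M2 := le_max_right _ _
    have hcp' : (0:ℝ) ≤ cp⁻¹ := (inv_pos.2 hcp).le
    have hcm' : (0:ℝ) ≤ cm⁻¹ := (inv_pos.2 hcm).le
    have A1 : φ x - cp⁻¹ * νp ≤ cp⁻¹ * M1 := by
      have := mul_le_mul_of_nonneg_left h1 hcp'
      have e1 : cp⁻¹ * (cp * φ x - νp) = φ x - cp⁻¹ * νp := by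
        field_simp
      linarith [e1 ▸ this]
    have A2 : -φ x - cm⁻¹ * νm ≤ cm⁻¹ * M2 := by
      have := mul_le_mul_of_nonneg_left h2 hcm'
      have e2 : cm⁻¹ * (-cm * φ x - νm) = -φ x - cm⁻¹ * νm := by
        field_simp
      linarith [e2 ▸ this]
    have B1 : cp⁻¹ * νp ≤ cp⁻¹ * |νp| := mul_le_mul_of_nonneg_left (le_abs_self _) hcp'
    have B2 : cm⁻¹ * νm ≤ cm⁻¹ * |νm| := mul_le_mul_of_nonneg_left (le_abs_self _) hcm'
    have habs : |φ x| ≤ cp⁻¹ * M1 + cm⁻¹ * M2 + K := by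
      rw [abs_le]
      constructor
      · have c1 : (0:ℝ) ≤ cp⁻¹ * M1 := mul_nonneg hcp' h1'
        have c2 : (0:ℝ) ≤ cp⁻¹ * |νp| := mul_nonneg hcp' (abs_nonneg _)
        rw [hK]; nlinarith [A2, B2]
      · have c1 : (0:ℝ) ≤ cm⁻¹ * M2 := mul_nonneg hcm' h2'
        have c2 : (0:ℝ) ≤ cm⁻¹ * |νm| := mul_nonneg hcm' (abs_nonneg _)
        rw [hK]; nlinarith [A1, B1]
    have hofreal : ENNReal.ofReal |φ x|
        ≤ ENNReal.ofReal cp⁻¹ * ENNReal.ofReal (cp * φ x - νp)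
          + ENNReal.ofReal cm⁻¹ * ENNReal.ofReal (-cm * φ x - νm) + ENNReal.ofReal K := by
      calc ENNReal.ofReal |φ x| ≤ ENNReal.ofReal (cp⁻¹ * M1 + cm⁻¹ * M2 + K) :=
            ENNReal.ofReal_le_ofReal habs
        _ ≤ ENNReal.ofReal (cp⁻¹ * M1 + cm⁻¹ * M2) + ENNReal.ofReal K := ENNReal.ofReal_add_le
        _ ≤ ENNReal.ofReal (cp⁻¹ * M1) + ENNReal.ofReal (cm⁻¹ * M2) + ENNReal.ofReal K := by
            exact add_le_add_left ENNReal.ofReal_add_le _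
        _ = ENNReal.ofReal cp⁻¹ * ENNReal.ofReal (cp * φ x - νp)
            + ENNReal.ofReal cm⁻¹ * ENNReal.ofReal (-cm * φ x - νm) + ENNReal.ofReal K := by
            rw [ENNReal.ofReal_mul hcp', ENNReal.ofReal_mul hcm', hM1, hM2,
              ofReal_max_zero, ofReal_max_zero]
    calc r x * ENNReal.ofReal |φ x|
        ≤ r x * (ENNReal.ofReal cp⁻¹ * ENNReal.ofReal (cp * φ x - νp)
          + ENNReal.ofReal cm⁻¹ * ENNReal.ofReal (-cm * φ x - νm) + ENNReal.ofReal K) :=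
          mul_le_mul_right hofreal _
      _ = ENNReal.ofReal cp⁻¹ * (r x * ENNReal.ofReal (cp * φ x - νp))
          + ENNReal.ofReal cm⁻¹ * (r x * ENNReal.ofReal (-cm * φ x - νm))
          + ENNReal.ofReal K * r x := by ring
  have hmA : Measurable fun x => r x * ENNReal.ofReal (cp * φ x - νp) :=
    hrm.mul (ENNReal.measurable_ofReal.comp ((measurable_const.mul hφm).sub measurable_const))
  have hmB : Measurable fun x => r x * ENNReal.ofReal (-cm * φ x - νm) :=
    hrm.mul (ENNReal.measurable_ofReal.comp ((measurable_const.mul hφm).sub measurable_const))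
  calc ∫⁻ x, r x * ENNReal.ofReal |φ x| ∂P
      ≤ ∫⁻ x, (ENNReal.ofReal cp⁻¹ * (r x * ENNReal.ofReal (cp * φ x - νp))
        + ENNReal.ofReal cm⁻¹ * (r x * ENNReal.ofReal (-cm * φ x - νm))
        + ENNReal.ofReal K * r x) ∂P := lintegral_mono hpt
    _ = ENNReal.ofReal cp⁻¹ * ∫⁻ x, r x * ENNReal.ofReal (cp * φ x - νp) ∂P
        + ENNReal.ofReal cm⁻¹ * ∫⁻ x, r x * ENNReal.ofReal (-cm * φ x - νm) ∂P
        + ENNReal.ofReal K * ∫⁻ x, r x ∂P := by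
        rw [lintegral_add_right (g := fun x => ENNReal.ofReal K * r x) _ (measurable_const.mul hrm),
          lintegral_add_right
            (g := fun x => ENNReal.ofReal cm⁻¹ * (r x * ENNReal.ofReal (-cm * φ x - νm))) _
            (measurable_const.mul hmB),
          lintegral_const_mul _ hmA, lintegral_const_mul _ hmB, lintegral_const_mul _ hrm]
    _ < ⊤ := by
        refine ENNReal.add_lt_top.2 ⟨ENNReal.add_lt_top.2 ⟨?_, ?_⟩, ?_⟩
        · exact ENNReal.mul_lt_top ENNReal.ofReal_lt_top hp
        · exact ENNReal.mul_lt_top ENNReal.ofReal_lt_top hm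
        · refine ENNReal.mul_lt_top ENNReal.ofReal_lt_top ?_
          exact lt_of_le_of_lt (Measure.lintegral_rnDeriv_le)
            (by simp [measure_univ] : Q Set.univ < ⊤)
end

section
/- Let g : ℝⁿ → ℝ be continuous and f : ℝⁿ → (−∞,∞] be convex. Then inf over x ∈ ℝⁿ of g(x) + f(x) equals inf over x in the relative interior of the domain {f < ∞} of g(x) + f(x). -/
open Filter Set Topology

lemma aux_mem_intrinsicInterior {V : Type*} [NormedAddCommGroup V] [NormedSpace ℝ V] {s : Set V}
    (hs : Convex ℝ s) {x z : V} (hx : x ∈ s) (hz : z ∈ intrinsicInterior ℝ s)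
    {t : ℝ} (ht0 : 0 < t) (ht1 : t ≤ 1) : t • z + (1 - t) • x ∈ intrinsicInterior ℝ s := by
  obtain ⟨z', hz', hz'eq⟩ := hz
  have hxA : x ∈ affineSpan ℝ s := subset_affineSpan ℝ s hx
  have hmem : ∀ c : ℝ, ∀ p : affineSpan ℝ s, c • (p : V) + (1 - c) • x ∈ affineSpan ℝ s := by
    intro c p
    have := AffineMap.lineMap_mem (Q := affineSpan ℝ s) c hxA p.2
    rwa [AffineMap.lineMap_apply_module, add_comm] at this
  classical
  let φ : affineSpan ℝ s → affineSpan ℝ s := fun p => ⟨t • (p : V) + (1 - t) • x, hmem t p⟩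
  let ψ : affineSpan ℝ s → affineSpan ℝ s := fun p => ⟨t⁻¹ • (p : V) + (1 - t⁻¹) • x, hmem t⁻¹ p⟩
  have hφc : Continuous φ :=
    ((continuous_subtype_val.const_smul t).add continuous_const).subtype_mk _
  have hψc : Continuous ψ :=
    ((continuous_subtype_val.const_smul t⁻¹).add continuous_const).subtype_mk _
  have hψφ : ∀ p, ψ (φ p) = p := by
    intro p
    apply Subtype.ext
    show t⁻¹ • (t • (p : V) + (1 - t) • x) + (1 - t⁻¹) • x = (p : V)
    match_scalars <;> field_simp <;> ring
  have hφψ : ∀ p, φ (ψ p) = p := by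
    intro p
    apply Subtype.ext
    show t • (t⁻¹ • (p : V) + (1 - t⁻¹) • x) + (1 - t) • x = (p : V)
    match_scalars <;> field_simp <;> ring
  let e : affineSpan ℝ s ≃ₜ affineSpan ℝ s := ⟨⟨φ, ψ, hψφ, hφψ⟩, hφc, hψc⟩
  have hopen : IsOpenMap φ := e.isOpenMap
  have himg : φ '' ((↑) ⁻¹' s : Set (affineSpan ℝ s)) ⊆ ((↑) ⁻¹' s : Set (affineSpan ℝ s)) := by
    rintro _ ⟨p, hp, rfl⟩
    exact hs hp hx ht0.le (by linarith) (by ring)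
  have hint : φ z' ∈ interior ((↑) ⁻¹' s : Set (affineSpan ℝ s)) := by
    have h1 : φ z' ∈ φ '' interior ((↑) ⁻¹' s : Set (affineSpan ℝ s)) := ⟨z', hz', rfl⟩
    exact interior_mono himg (hopen.image_interior_subset _ h1)
  exact ⟨φ z', hint, by simp [φ, hz'eq]⟩

/-- **Lemma.** To minimize the sum of a continuous function and a convex function
`f : ℝⁿ → (-∞,∞]`, it suffices to minimize over the relative interior of the domain of `f`. -/
theorem inf_add_eq_inf_intrinsicInterior {n : ℕ}
    (g : (Fin n → ℝ) → ℝ) (hg : Continuous g)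
    (f : (Fin n → ℝ) → EReal) (hfbot : ∀ x, f x ≠ ⊥)
    (hfconv : ∀ x y : Fin n → ℝ, ∀ t : ℝ, 0 ≤ t → t ≤ 1 →
      f (t • x + (1 - t) • y) ≤ (t : EReal) * f x + ((1 - t : ℝ) : EReal) * f y) :
    (⨅ x : Fin n → ℝ, ((g x : ℝ) : EReal) + f x)
      = ⨅ x ∈ intrinsicInterior ℝ {y : Fin n → ℝ | f y < ⊤}, (((g x : ℝ) : EReal) + f x) := by
  set S : Set (Fin n → ℝ) := {y | f y < ⊤} with hS
  have hreal : ∀ {y}, y ∈ S → f y = (((f y).toReal : ℝ) : EReal) := fun hy =>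
    (EReal.coe_toReal (LT.lt.ne_top hy) (hfbot _)).symm
  have hconv : Convex ℝ S := by
    intro u hu v hv a b ha hb hab
    have hb' : b = 1 - a := by linarith
    subst hb'
    have h := hfconv u v a ha (by linarith)
    refine lt_of_le_of_lt h ?_
    rw [hreal hu, hreal hv, ← EReal.coe_mul, ← EReal.coe_mul, ← EReal.coe_add]
    exact EReal.coe_lt_top _
  apply le_antisymm
  · exact le_iInf₂ fun x _ => iInf_le _ x
  · refine le_iInf fun x => ?_
    by_cases hx : f x = ⊤
    · rw [hx, EReal.add_top_of_ne_bot (by simp)]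
      exact le_top
    have hxS : x ∈ S := lt_top_iff_ne_top.mpr hx
    obtain ⟨z, hz⟩ := Set.Nonempty.intrinsicInterior hconv ⟨x, hxS⟩
    have hzS : z ∈ S := intrinsicInterior_subset hz
    set r : ℝ := (f x).toReal
    set rz : ℝ := (f z).toReal
    have key : ∀ t ∈ Ioc (0:ℝ) 1,
        (⨅ y ∈ intrinsicInterior ℝ S, (((g y : ℝ) : EReal) + f y))
          ≤ ((g (t • z + (1 - t) • x) + (t * rz + (1 - t) * r) : ℝ) : EReal) := by
      rintro t ⟨ht0, ht1⟩
      have hmem := aux_mem_intrinsicInterior hconv hxS hz ht0 ht1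
      refine le_trans (iInf₂_le _ hmem) ?_
      have hle : f (t • z + (1 - t) • x) ≤ ((t * rz + (1 - t) * r : ℝ) : EReal) := by
        have h := hfconv z x t ht0.le ht1
        rwa [hreal hzS, hreal hxS, ← EReal.coe_mul, ← EReal.coe_mul, ← EReal.coe_add] at h
      rw [EReal.coe_add]
      exact add_le_add le_rfl hle
    have htend : Tendsto
        (fun t : ℝ => ((g (t • z + (1 - t) • x) + (t * rz + (1 - t) * r) : ℝ) : EReal))
        (𝓝[>] (0:ℝ)) (𝓝 ((g x + r : ℝ) : EReal)) := by
      have hc : Continuous (fun t : ℝ => g (t • z + (1 - t) • x) + (t * rz + (1 - t) * r)) := by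
        apply Continuous.add
        · exact hg.comp ((continuous_id.smul continuous_const).add
            ((continuous_const.sub continuous_id).smul continuous_const))
        · exact (continuous_id.mul continuous_const).add
            ((continuous_const.sub continuous_id).mul continuous_const)
      have h0 : (fun t : ℝ => g (t • z + (1 - t) • x) + (t * rz + (1 - t) * r)) 0 = g x + r := by
        simp
      have : Tendsto (fun t : ℝ => g (t • z + (1 - t) • x) + (t * rz + (1 - t) * r))
          (𝓝[>] (0:ℝ)) (𝓝 ((fun t : ℝ => g (t • z + (1 - t) • x) + (t * rz + (1 - t) * r)) 0)) :=
        (hc.tendsto 0).mono_left nhdsWithin_le_nhds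
      rw [h0] at this
      exact (continuous_coe_real_ereal.tendsto _).comp this
    have hev : ∀ᶠ t in 𝓝[>] (0:ℝ),
        (⨅ y ∈ intrinsicInterior ℝ S, (((g y : ℝ) : EReal) + f y))
          ≤ ((g (t • z + (1 - t) • x) + (t * rz + (1 - t) * r) : ℝ) : EReal) :=
      eventually_of_mem (Ioc_mem_nhdsGT_of_mem ⟨le_refl 0, zero_lt_one⟩) key
    have hfin := ge_of_tendsto htend hev
    rw [hreal hxS, ← EReal.coe_add]
    exact hfin
end

section
/- Let V be a real vector space, X ⊂ V and C ⊂ ℝᵏ nonempty convex sets, f : X × C → ℝ jointly convex, and h : V → ℝᵏ linear with h(X) ⊂ C. Suppose that inf over x ∈ X of f(x,z) + ν·(h(x) − z) is > −∞ for all ν ∈ ℝᵏ and z ∈ C. Then for every set K with h(X) ⊂ K ⊂ C, inf over x ∈ X of f(x, h(x)) equals inf over z ∈ K of sup over ν ∈ ℝᵏ of inf over x ∈ X of f(x,z) + ν·(h(x) − z). -/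
set_option maxHeartbeats 1000000

open Filter Set

section aux

variable {V : Type*} [AddCommGroup V] [Module ℝ V] {k : ℕ}

/-- If a linear functional is uniformly ≥ δ > 0 on the constraint residuals, the dual value is
unbounded; in particular it exceeds any `r'`. -/
private lemma cmd_ray (X : Set V) (h : V →ₗ[ℝ] (Fin k → ℝ)) (z : Fin k → ℝ)
    (f : V → (Fin k → ℝ) → ℝ) {m : ℝ} (hm : ∀ x ∈ X, m ≤ f x z)
    {ω : Fin k → ℝ} {δ : ℝ} (hδ : 0 < δ)
    (hω : ∀ x ∈ X, δ ≤ ∑ i, ω i * (h x i - z i)) (r' : ℝ) :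
    ∃ ν : Fin k → ℝ, ∀ x ∈ X, r' ≤ f x z + ∑ i, ν i * (h x i - z i) := by
  set t : ℝ := max ((r' - m) / δ) 0 with ht
  have ht0 : 0 ≤ t := le_max_right _ _
  refine ⟨fun i => t * ω i, fun x hx => ?_⟩
  have hsum : ∑ i, (t * ω i) * (h x i - z i) = t * ∑ i, ω i * (h x i - z i) := by
    rw [Finset.mul_sum]; exact Finset.sum_congr rfl fun i _ => by ring
  have h1 : t * δ ≤ t * ∑ i, ω i * (h x i - z i) :=
    mul_le_mul_of_nonneg_left (hω x hx) ht0
  have h2 : r' - m ≤ t * δ := by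
    have : (r' - m) / δ ≤ t := le_max_left _ _
    calc r' - m = ((r' - m) / δ) * δ := by field_simp
    _ ≤ t * δ := mul_le_mul_of_nonneg_right this hδ.le
  have := hm x hx
  rw [hsum]; linarith

end aux

section aux2

variable {V : Type*} [AddCommGroup V] [Module ℝ V] {k : ℕ}

/-- Core geometric bound: if `z` lies in the closure of `h '' X`, then `f · z` admits a global
lower bound `r - C₁ * ‖h x - z‖` on `X`. -/
private lemma cmd_core (X : Set V) (hXconv : Convex ℝ X)
    (C : Set (Fin k → ℝ))
    (f : V → (Fin k → ℝ) → ℝ)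
    (hf : ∀ x₁ ∈ X, ∀ x₂ ∈ X, ∀ z₁ ∈ C, ∀ z₂ ∈ C, ∀ t : ℝ, 0 ≤ t → t ≤ 1 →
      f (t • x₁ + (1 - t) • x₂) (t • z₁ + (1 - t) • z₂) ≤ t * f x₁ z₁ + (1 - t) * f x₂ z₂)
    (h : V →ₗ[ℝ] (Fin k → ℝ)) (hhX : h '' X ⊆ C)
    (z : Fin k → ℝ) (hz : z ∈ C) (hcl : z ∈ closure (h '' X))
    (r : ℝ) (hr : ∀ x ∈ X, r ≤ f x (h x)) :
    ∃ C₁ : ℝ, 0 ≤ C₁ ∧ ∀ x ∈ X, r ≤ f x z + C₁ * ‖h x - z‖ := by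
  have hXne' : (h '' X).Nonempty := by
    rcases eq_empty_or_nonempty (h '' X) with he | hne
    · rw [he, closure_empty] at hcl; exact absurd hcl (notMem_empty z)
    · exact hne
  have hWconv : Convex ℝ (h '' X) := hXconv.linear_image h
  have hzspan : z ∈ affineSpan ℝ (h '' X) := by
    have hclosed : IsClosed ((affineSpan ℝ (h '' X) : AffineSubspace ℝ (Fin k → ℝ)) :
        Set (Fin k → ℝ)) := (affineSpan ℝ (h '' X)).closed_of_finiteDimensional
    exact closure_minimal (subset_affineSpan ℝ _) hclosed hcl
  obtain ⟨w₀, hw₀⟩ := Set.Nonempty.intrinsicInterior hWconv hXne'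
  have hw₀mem : w₀ ∈ h '' X := intrinsicInterior_subset hw₀
  rw [mem_intrinsicInterior] at hw₀
  obtain ⟨y, hyint, hyeq⟩ := hw₀
  obtain ⟨ε, hε0, hball⟩ := Metric.isOpen_iff.mp isOpen_interior y hyint
  have hP : ∀ v : Fin k → ℝ, v ∈ (affineSpan ℝ (h '' X)).direction → ‖v‖ < ε →
      w₀ + v ∈ h '' X := by
    intro v hv hvn
    have hmem : w₀ + v ∈ affineSpan ℝ (h '' X) := by
      have hy2 : (y : Fin k → ℝ) ∈ affineSpan ℝ (h '' X) := y.2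
      have := AffineSubspace.vadd_mem_of_mem_direction hv hy2
      rw [hyeq] at this
      simpa [add_comm] using this
    have hp : (⟨w₀ + v, hmem⟩ : affineSpan ℝ (h '' X)) ∈ Metric.ball y ε := by
      rw [Metric.mem_ball, Subtype.dist_eq]
      simp only [hyeq]
      rw [dist_eq_norm]
      simpa using hvn
    have := interior_subset (hball hp)
    exact this
  obtain ⟨x₀, hx₀X, hx₀⟩ := hw₀mem
  set W₀ := (affineSpan ℝ (h '' X)).direction with hW₀
  set g₀ : W₀ → ℝ := fun v => f x₀ (w₀ + ↑v) with hg₀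
  have hgconv : ConvexOn ℝ (Metric.ball (0 : W₀) ε) g₀ := by
    refine ⟨convex_ball _ _, ?_⟩
    intro v₁ h₁ v₂ h₂ a b ha hb hab
    have hn₁ : ‖(v₁ : Fin k → ℝ)‖ < ε := by
      have := mem_ball_zero_iff.mp h₁; simpa [Submodule.coe_norm] using this
    have hn₂ : ‖(v₂ : Fin k → ℝ)‖ < ε := by
      have := mem_ball_zero_iff.mp h₂; simpa [Submodule.coe_norm] using this
    have hc₁ : w₀ + (v₁ : Fin k → ℝ) ∈ C := hhX (hP _ v₁.2 hn₁)
    have hc₂ : w₀ + (v₂ : Fin k → ℝ) ∈ C := hhX (hP _ v₂.2 hn₂)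
    have h3 := hf x₀ hx₀X x₀ hx₀X (w₀ + ↑v₁) hc₁ (w₀ + ↑v₂) hc₂ a ha (by linarith)
    rw [show (1 : ℝ) - a = b by linarith] at h3
    rw [show a • x₀ + b • x₀ = x₀ by rw [← add_smul, hab, one_smul]] at h3
    have harg : a • (w₀ + (v₁ : Fin k → ℝ)) + b • (w₀ + (v₂ : Fin k → ℝ))
        = w₀ + ((a • v₁ + b • v₂ : W₀) : Fin k → ℝ) := by
      push_cast
      have : a • (w₀ + (v₁ : Fin k → ℝ)) + b • (w₀ + (v₂ : Fin k → ℝ))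
          = (a + b) • w₀ + (a • (v₁ : Fin k → ℝ) + b • (v₂ : Fin k → ℝ)) := by module
      rw [this, hab, one_smul]
    rw [harg] at h3
    simpa [hg₀, smul_eq_mul] using h3
  have hcont : ContinuousOn g₀ (Metric.ball (0 : W₀) ε) := by
    have := hgconv.continuousOn_interior
    rwa [Metric.isOpen_ball.interior_eq] at this
  have hKc : IsCompact (Metric.closedBall (0 : W₀) (ε / 2)) := isCompact_closedBall _ _
  obtain ⟨vM, hvM, hM⟩ := hKc.exists_isMaxOn ⟨0, by simp [hε0.le]; positivity⟩
    (hcont.mono (Metric.closedBall_subset_ball (by linarith)))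
  set M := g₀ vM with hMdef
  refine ⟨2 * max (M - r) 0 / ε, by positivity, ?_⟩
  intro x hx
  by_cases hwz : h x = z
  · rw [hwz, sub_self, norm_zero, mul_zero, add_zero]
    have := hr x hx
    rwa [hwz] at this
  · set d : ℝ := ‖h x - z‖ with hd_def
    have hd : 0 < d := by
      rw [hd_def, norm_pos_iff]
      exact sub_ne_zero.mpr hwz
    set lam : ℝ := ε / (2 * d) with hlam_def
    have hlam : 0 < lam := by positivity
    have hvdir : lam • (h x - z) ∈ W₀ := by
      have h1 : h x ∈ affineSpan ℝ (h '' X) := subset_affineSpan ℝ _ ⟨x, hx, rfl⟩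
      have h2 := AffineSubspace.vsub_mem_direction h1 hzspan
      exact Submodule.smul_mem _ _ (by simpa [vsub_eq_sub] using h2)
    set v : W₀ := ⟨lam • (h x - z), hvdir⟩ with hv_def
    have hvnorm : ‖(v : Fin k → ℝ)‖ = ε / 2 := by
      show ‖lam • (h x - z)‖ = ε / 2
      rw [norm_smul, Real.norm_of_nonneg hlam.le, ← hd_def, hlam_def]
      field_simp
    have hcmem : w₀ + (v : Fin k → ℝ) ∈ h '' X := hP _ v.2 (by rw [hvnorm]; linarith)
    have hcC : w₀ + (v : Fin k → ℝ) ∈ C := hhX hcmem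
    have hMc : f x₀ (w₀ + (v : Fin k → ℝ)) ≤ M := by
      have hvball : v ∈ Metric.closedBall (0 : W₀) (ε / 2) := by
        rw [Metric.mem_closedBall, dist_zero_right]
        rw [show ‖v‖ = ‖(v : Fin k → ℝ)‖ from Submodule.coe_norm v, hvnorm]
      exact hM hvball
    set t : ℝ := 1 / (1 + lam) with ht_def
    have h1lam : 0 < 1 + lam := by linarith
    have ht0 : 0 ≤ t := by positivity
    have ht1 : t ≤ 1 := by rw [ht_def, div_le_one h1lam]; linarith
    have hts : t * lam = 1 - t := by rw [ht_def]; field_simp; ring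
    have h3 := hf x₀ hx₀X x hx (w₀ + ↑v) hcC z hz t ht0 ht1
    have harg : t • (w₀ + (v : Fin k → ℝ)) + (1 - t) • z = h (t • x₀ + (1 - t) • x) := by
      rw [map_add, map_smul, map_smul, hx₀]
      show t • (w₀ + lam • (h x - z)) + (1 - t) • z = t • w₀ + (1 - t) • h x
      rw [← hts]
      module
    have hyX : t • x₀ + (1 - t) • x ∈ X := hXconv hx₀X hx ht0 (by linarith) (by ring)
    have hdiag : r ≤ f (t • x₀ + (1 - t) • x) (h (t • x₀ + (1 - t) • x)) := hr _ hyX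
    rw [harg] at h3
    have hchain : r ≤ t * M + (1 - t) * f x z := by nlinarith [hMc, hdiag, h3, ht0]
    have htt : t * (1 + lam) = 1 := by rw [ht_def]; field_simp
    have hmul : r * (1 + lam) ≤ M + lam * f x z := by
      calc r * (1 + lam) ≤ (t * M + (1 - t) * f x z) * (1 + lam) :=
            mul_le_mul_of_nonneg_right hchain h1lam.le
        _ = (t * (1 + lam)) * M + ((1 + lam) - t * (1 + lam)) * f x z := by ring
        _ = M + lam * f x z := by rw [htt]; ring
    have h4 : lam * (r - f x z) ≤ M - r := by nlinarith [hmul]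
    have h2dε : (0 : ℝ) < 2 * d / ε := by positivity
    have h5 := mul_le_mul_of_nonneg_right h4 h2dε.le
    have hlam1 : lam * (2 * d / ε) = 1 := by rw [hlam_def]; field_simp
    have hle : r - f x z ≤ (M - r) * (2 * d / ε) := by
      calc r - f x z = (lam * (2 * d / ε)) * (r - f x z) := by rw [hlam1]; ring
        _ = lam * (r - f x z) * (2 * d / ε) := by ring
        _ ≤ (M - r) * (2 * d / ε) := h5
    have hmax : (M - r) * (2 * d / ε) ≤ (2 * max (M - r) 0 / ε) * d := by
      have h6 : (M - r) ≤ max (M - r) 0 := le_max_left _ _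
      calc (M - r) * (2 * d / ε) ≤ max (M - r) 0 * (2 * d / ε) :=
            mul_le_mul_of_nonneg_right h6 h2dε.le
        _ = (2 * max (M - r) 0 / ε) * d := by ring
    linarith

private lemma cmd_key (X : Set V) (hXne : X.Nonempty) (hXconv : Convex ℝ X)
    (C : Set (Fin k → ℝ))
    (f : V → (Fin k → ℝ) → ℝ)
    (hf : ∀ x₁ ∈ X, ∀ x₂ ∈ X, ∀ z₁ ∈ C, ∀ z₂ ∈ C, ∀ t : ℝ, 0 ≤ t → t ≤ 1 →
      f (t • x₁ + (1 - t) • x₂) (t • z₁ + (1 - t) • z₂) ≤ t * f x₁ z₁ + (1 - t) * f x₂ z₂)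
    (h : V →ₗ[ℝ] (Fin k → ℝ)) (hhX : h '' X ⊆ C)
    (z : Fin k → ℝ) (hz : z ∈ C) {m : ℝ} (hm : ∀ x ∈ X, m ≤ f x z)
    (r' r : ℝ) (hr'r : r' < r) (hr : ∀ x ∈ X, r ≤ f x (h x)) :
    ∃ ν : Fin k → ℝ, ∀ x ∈ X, r' ≤ f x z + ∑ i, ν i * (h x i - z i) := by
  obtain ⟨x₁, hx₁⟩ := hXne
  by_cases hcl : z ∈ closure (h '' X)
  · -- z in the closure: use the core bound and separation in (Fin k → ℝ) × ℝ
    obtain ⟨C₁, hC₁0, hcore⟩ := cmd_core X hXconv C f hf h hhX z hz hcl r hr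
    set E : Set ((Fin k → ℝ) × ℝ) := {p | ∃ x ∈ X, p.1 = h x - z ∧ f x z ≤ p.2} with hE
    have hEconv : Convex ℝ E := by
      rintro ⟨u₁, t₁⟩ ⟨xa, hxa, hua, hta⟩ ⟨u₂, t₂⟩ ⟨xb, hxb, hub, htb⟩ a b ha hb hab
      have hua' : u₁ = h xa - z := hua
      have hub' : u₂ = h xb - z := hub
      have hta' : f xa z ≤ t₁ := hta
      have htb' : f xb z ≤ t₂ := htb
      refine ⟨a • xa + b • xb, hXconv hxa hxb ha hb hab, ?_, ?_⟩
      · show a • u₁ + b • u₂ = h (a • xa + b • xb) - z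
        rw [hua', hub', map_add, map_smul, map_smul]
        funext i
        simp only [Pi.add_apply, Pi.smul_apply, Pi.sub_apply, smul_eq_mul]
        linear_combination (-z i) * hab
      · show f (a • xa + b • xb) z ≤ a * t₁ + b * t₂
        have h2 : f (a • xa + b • xb) z ≤ a * f xa z + b * f xb z := by
          have h3 := hf xa hxa xb hxb z hz z hz a ha (by linarith)
          rw [show (1 : ℝ) - a = b by linarith] at h3
          rw [show a • z + b • z = z by rw [← add_smul, hab, one_smul]] at h3
          exact h3
        calc f (a • xa + b • xb) z ≤ a * f xa z + b * f xb z := h2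
          _ ≤ a * t₁ + b * t₂ := by
              have := mul_le_mul_of_nonneg_left hta' ha
              have := mul_le_mul_of_nonneg_left htb' hb
              linarith
    have hfar : (((0 : Fin k → ℝ), r') : (Fin k → ℝ) × ℝ) ∉ closure E := by
      intro hmem
      have hEF : closure E ⊆ {p : (Fin k → ℝ) × ℝ | r ≤ p.2 + C₁ * ‖p.1‖} := by
        refine closure_minimal ?_ ?_
        · rintro ⟨u, t⟩ ⟨x, hx, hu, ht⟩
          simp only [mem_setOf_eq] at *
          subst hu
          have := hcore x hx
          have hC := mul_le_mul_of_nonneg_left (le_refl ‖h x - z‖) hC₁0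
          nlinarith [hcore x hx]
        · have : {p : (Fin k → ℝ) × ℝ | r ≤ p.2 + C₁ * ‖p.1‖}
              = (fun p : (Fin k → ℝ) × ℝ => p.2 + C₁ * ‖p.1‖) ⁻¹' (Ici r) := rfl
          rw [this]
          exact IsClosed.preimage (by fun_prop) isClosed_Ici
      have := hEF hmem
      simp only [mem_setOf_eq, norm_zero, mul_zero, add_zero] at this
      linarith
    obtain ⟨φ, u, hu1, hu2⟩ :=
      geometric_hahn_banach_closed_point hEconv.closure isClosed_closure hfar
    set β : ℝ := φ ((0 : Fin k → ℝ), (1 : ℝ)) with hβdef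
    have hdec : ∀ (w : Fin k → ℝ) (t : ℝ), φ (w, t) = φ (w, 0) + t * β := by
      intro w t
      have hwt : (w, t) = ((w, (0 : ℝ)) + t • ((0 : Fin k → ℝ), (1 : ℝ))) := by
        simp [Prod.ext_iff]
      rw [hwt, map_add, map_smul, smul_eq_mul]
    have hsum : ∀ w : Fin k → ℝ,
        φ (w, 0) = ∑ i, w i * φ ((fun j => if i = j then 1 else 0), 0) := by
      intro w
      have := LinearMap.pi_apply_eq_sum_univ
        ((φ : ((Fin k → ℝ) × ℝ) →ₗ[ℝ] ℝ).comp (LinearMap.inl ℝ (Fin k → ℝ) ℝ)) w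
      simpa [smul_eq_mul] using this
    have hφ0 : φ ((0 : Fin k → ℝ), (0 : ℝ)) = 0 := by
      have : (((0 : Fin k → ℝ), (0 : ℝ)) : (Fin k → ℝ) × ℝ) = 0 := rfl
      rw [this, map_zero]
    have hu2' : u < r' * β := by
      have := hu2
      rw [hdec 0 r', hφ0, zero_add] at this
      exact this
    have hβ : β ≤ 0 := by
      by_contra hβpos
      push_neg at hβpos
      set T : ℝ := max (f x₁ z) ((u - φ (h x₁ - z, 0)) / β) with hT
      have hbT : ((h x₁ - z, T) : (Fin k → ℝ) × ℝ) ∈ E :=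
        ⟨x₁, hx₁, rfl, le_max_left _ _⟩
      have h1 : φ (h x₁ - z, T) < u := hu1 _ (subset_closure hbT)
      rw [hdec] at h1
      have h2 : u - φ (h x₁ - z, 0) ≤ T * β :=
        (div_le_iff₀ hβpos).mp (le_max_right _ _)
      linarith
    rcases hβ.lt_or_eq with hβneg | hβ0
    · -- β < 0 : non-vertical separating hyperplane, gives the multiplier directly
      refine ⟨fun i => φ ((fun j => if i = j then 1 else 0), 0) / β, fun x hx => ?_⟩
      have hb : φ (h x - z, f x z) < u :=
        hu1 _ (subset_closure ⟨x, hx, rfl, le_refl _⟩)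
      rw [hdec] at hb
      have hS : ∑ i, (φ ((fun j => if i = j then 1 else 0), 0) / β) * (h x i - z i)
          = φ (h x - z, 0) / β := by
        rw [hsum (h x - z), Finset.sum_div]
        refine Finset.sum_congr rfl fun i _ => ?_
        have : (h x - z) i = h x i - z i := rfl
        rw [this]; ring
      rw [hS]
      have hb' : φ (h x - z, 0) + f x z * β < r' * β := lt_trans hb hu2'
      have hq : (φ (h x - z, 0) / β) * β = φ (h x - z, 0) :=
        div_mul_cancel₀ _ hβneg.ne
      have hgoal : r' * (-β) < (f x z + φ (h x - z, 0) / β) * (-β) := by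
        nlinarith [hb', hq]
      have := lt_of_mul_lt_mul_right hgoal (by linarith : (0:ℝ) ≤ -β)
      linarith
    · -- β = 0 : vertical hyperplane, use the ray lemma
      have hu0 : u < 0 := by rw [hβ0] at hu2'; simpa using hu2'
      have hray := cmd_ray X h z f hm (δ := -u)
        (ω := fun i => -φ ((fun j => if i = j then 1 else 0), 0)) (by linarith) ?_ r'
      · exact hray
      · intro x hx
        have hb : φ (h x - z, f x z) < u :=
          hu1 _ (subset_closure ⟨x, hx, rfl, le_refl _⟩)
        rw [hdec] at hb
        rw [hβ0, mul_zero, add_zero] at hb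
        have hSS : ∑ i, (-φ ((fun j => if i = j then 1 else 0), 0)) * (h x i - z i)
            = -φ (h x - z, 0) := by
          rw [hsum (h x - z), ← Finset.sum_neg_distrib]
          refine Finset.sum_congr rfl fun i _ => ?_
          have : (h x - z) i = h x i - z i := rfl
          rw [this]; ring
        rw [hSS]
        linarith
  · -- z outside the closure of h '' X : separate z from h '' X
    have hWconv : Convex ℝ (closure (h '' X)) := (hXconv.linear_image h).closure
    obtain ⟨φ, u, hu1, hu2⟩ :=
      geometric_hahn_banach_closed_point hWconv isClosed_closure hcl
    have hsum : ∀ w : Fin k → ℝ,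
        φ w = ∑ i, w i * φ (fun j => if i = j then 1 else 0) := by
      intro w
      have := LinearMap.pi_apply_eq_sum_univ (φ : (Fin k → ℝ) →ₗ[ℝ] ℝ) w
      simpa [smul_eq_mul] using this
    refine cmd_ray X h z f hm (δ := φ z - u)
      (ω := fun i => -φ (fun j => if i = j then 1 else 0)) (by linarith) ?_ r'
    intro x hx
    have hb : φ (h x) < u := hu1 _ (subset_closure ⟨x, hx, rfl⟩)
    have hSS : ∑ i, (-φ (fun j => if i = j then 1 else 0)) * (h x i - z i)
        = -(φ (h x) - φ z) := by
      rw [← map_sub, hsum (h x - z), ← Finset.sum_neg_distrib]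
      refine Finset.sum_congr rfl fun i _ => ?_
      have : (h x - z) i = h x i - z i := rfl
      rw [this]; ring
    rw [hSS]
    linarith


end aux2


/-- **Lemma (constrained disintegration of a convex minimization problem).** -/
theorem convex_min_disintegration {V : Type*} [AddCommGroup V] [Module ℝ V] {k : ℕ}
    (X : Set V) (hXne : X.Nonempty) (hXconv : Convex ℝ X)
    (C : Set (Fin k → ℝ)) (hCne : C.Nonempty) (hCconv : Convex ℝ C)
    (f : V → (Fin k → ℝ) → ℝ)
    (hf : ∀ x₁ ∈ X, ∀ x₂ ∈ X, ∀ z₁ ∈ C, ∀ z₂ ∈ C, ∀ t : ℝ, 0 ≤ t → t ≤ 1 →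
      f (t • x₁ + (1 - t) • x₂) (t • z₁ + (1 - t) • z₂) ≤ t * f x₁ z₁ + (1 - t) * f x₂ z₂)
    (h : V →ₗ[ℝ] (Fin k → ℝ)) (hhX : h '' X ⊆ C)
    (hSlater : ∀ (ν : Fin k → ℝ), ∀ z ∈ C,
      (⊥ : EReal) < ⨅ x ∈ X, ((f x z + ∑ i, ν i * (h x i - z i) : ℝ) : EReal))
    (K : Set (Fin k → ℝ)) (hK1 : h '' X ⊆ K) (hK2 : K ⊆ C) :
    (⨅ x ∈ X, ((f x (h x) : ℝ) : EReal))
      = ⨅ z ∈ K, ⨆ ν : Fin k → ℝ, ⨅ x ∈ X,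
          ((f x z + ∑ i, ν i * (h x i - z i) : ℝ) : EReal) := by
  obtain ⟨x₁, hx₁⟩ := hXne
  have key : ∀ z ∈ C, ∀ m : ℝ, (∀ x ∈ X, m ≤ f x z) → ∀ r' r : ℝ, r' < r →
      (∀ x ∈ X, r ≤ f x (h x)) →
      ∃ ν : Fin k → ℝ, ∀ x ∈ X, r' ≤ f x z + ∑ i, ν i * (h x i - z i) :=
    fun z hzC m hm r' r hr'r hr =>
      cmd_key X ⟨x₁, hx₁⟩ hXconv C f hf h hhX z hzC hm r' r hr'r hr
  refine le_antisymm ?_ ?_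
  · -- hard direction
    refine le_iInf₂ fun z hz => ?_
    -- lower bound m for f · z on X, from Slater at ν = 0
    have hslater0 := hSlater 0 z (hK2 hz)
    have hsimp : ∀ x : V, ((f x z + ∑ i, (0 : Fin k → ℝ) i * (h x i - z i) : ℝ) : EReal)
        = ((f x z : ℝ) : EReal) := by intro x; norm_num
    simp_rw [hsimp] at hslater0
    set mE : EReal := ⨅ x ∈ X, ((f x z : ℝ) : EReal) with hmE
    have hmEbot : mE ≠ ⊥ := hslater0.ne'
    have hmEtop : mE ≠ ⊤ := by
      refine ne_top_of_le_ne_top ?_ (iInf₂_le x₁ hx₁)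
      exact EReal.coe_ne_top _
    set m : ℝ := mE.toReal with hmdef
    have hmE' : (m : EReal) = mE := EReal.coe_toReal hmEtop hmEbot
    have hm : ∀ x ∈ X, m ≤ f x z := by
      intro x hx
      have : mE ≤ ((f x z : ℝ) : EReal) := iInf₂_le x hx
      rw [← hmE'] at this
      exact_mod_cast this
    set L : EReal := ⨅ x ∈ X, ((f x (h x) : ℝ) : EReal) with hL
    rcases eq_or_ne L ⊥ with hLbot | hLbot
    · rw [hLbot]; exact bot_le
    have hLtop : L ≠ ⊤ := by
      refine ne_top_of_le_ne_top ?_ (iInf₂_le x₁ hx₁)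
      exact EReal.coe_ne_top _
    set r : ℝ := L.toReal with hrdef
    have hLr : (r : EReal) = L := EReal.coe_toReal hLtop hLbot
    have hr : ∀ x ∈ X, r ≤ f x (h x) := by
      intro x hx
      have : L ≤ ((f x (h x) : ℝ) : EReal) := iInf₂_le x hx
      rw [← hLr] at this
      exact_mod_cast this
    rw [← hLr]
    set S : EReal := ⨆ ν : Fin k → ℝ, ⨅ x ∈ X,
        ((f x z + ∑ i, ν i * (h x i - z i) : ℝ) : EReal) with hS
    by_contra hcon
    push_neg at hcon
    have hSm : (m : EReal) ≤ S := by
      refine le_trans ?_ (le_iSup _ (0 : Fin k → ℝ))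
      simp_rw [hsimp]
      rw [hmE']
    have hSbot : S ≠ ⊥ := fun hS0 => by rw [hS0] at hSm; exact (EReal.bot_lt_coe m).not_ge hSm
    have hStop : S ≠ ⊤ := fun hS0 => by rw [hS0] at hcon; exact (lt_irrefl _ (hcon.trans_le le_top))
    set s₀ : ℝ := S.toReal with hs₀def
    have hs₀ : (s₀ : EReal) = S := EReal.coe_toReal hStop hSbot
    have hs₀r : s₀ < r := by rw [← hs₀] at hcon; exact_mod_cast hcon
    obtain ⟨ν, hν⟩ := key z (hK2 hz) m hm ((s₀ + r) / 2) r (by linarith) hr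
    have : (((s₀ + r) / 2 : ℝ) : EReal) ≤ S := by
      refine le_trans ?_ (le_iSup _ ν)
      exact le_iInf₂ fun x hx => EReal.coe_le_coe_iff.mpr (hν x hx)
    rw [← hs₀] at this
    have : (s₀ + r) / 2 ≤ s₀ := by exact_mod_cast this
    linarith
  · -- easy direction
    refine le_iInf₂ fun x hx => ?_
    have hzK : h x ∈ K := hK1 ⟨x, hx, rfl⟩
    refine le_trans (iInf₂_le (h x) hzK) ?_
    refine iSup_le fun ν => ?_
    refine le_trans (iInf₂_le x hx) ?_
    apply le_of_eq
    norm_num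
end

section
/- Let V be a real vector space, X ⊂ V and C ⊂ ℝᵏ nonempty convex sets, f : X × C → ℝ jointly convex, and h : V → ℝᵏ linear with h(X) ⊂ C. Suppose that inf over x ∈ X of f(x,z) + ν·(h(x) − z) is > −∞ for all ν ∈ ℝᵏ and z ∈ C. Define F : ℝᵏ → (−∞,∞] by F(z) = sup over ν ∈ ℝᵏ of inf over x ∈ X of f(x,z) + ν·(h(x) − z) for z ∈ C, and F(z) = ∞ for z ∉ C. Then F is convex on ℝᵏ, F(z) < ∞ for every z ∈ h(X), and F(z) = ∞ for every z ∈ C that lies outside the closure of h(X). -/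
open Filter Set

/-- **Properties of the dual value function `F`.** With
`F(z) = sup_ν inf_{x ∈ X} {f(x,z) + ν·(h(x) - z)}` for `z ∈ C` and `F(z) = ∞` otherwise,
`F` is convex on `ℝᵏ`, finite on `h(X)`, and equal to `∞` on `C \ closure (h(X))`. -/
theorem dual_value_function_properties {V : Type*} [AddCommGroup V] [Module ℝ V] {k : ℕ}
    (X : Set V) (hXne : X.Nonempty) (hXconv : Convex ℝ X)
    (C : Set (Fin k → ℝ)) (hCne : C.Nonempty) (hCconv : Convex ℝ C)
    (f : V → (Fin k → ℝ) → ℝ)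
    (hf : ∀ x₁ ∈ X, ∀ x₂ ∈ X, ∀ z₁ ∈ C, ∀ z₂ ∈ C, ∀ t : ℝ, 0 ≤ t → t ≤ 1 →
      f (t • x₁ + (1 - t) • x₂) (t • z₁ + (1 - t) • z₂) ≤ t * f x₁ z₁ + (1 - t) * f x₂ z₂)
    (h : V →ₗ[ℝ] (Fin k → ℝ)) (hhX : h '' X ⊆ C)
    (hSlater : ∀ (ν : Fin k → ℝ), ∀ z ∈ C,
      (⊥ : EReal) < ⨅ x ∈ X, ((f x z + ∑ i, ν i * (h x i - z i) : ℝ) : EReal))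
    (F : (Fin k → ℝ) → EReal)
    (hF1 : ∀ z ∈ C, F z = ⨆ ν : Fin k → ℝ, ⨅ x ∈ X,
      ((f x z + ∑ i, ν i * (h x i - z i) : ℝ) : EReal))
    (hF2 : ∀ z ∉ C, F z = ⊤) :
    (∀ z₁ z₂ : Fin k → ℝ, ∀ t : ℝ, 0 ≤ t → t ≤ 1 →
        F (t • z₁ + (1 - t) • z₂) ≤ (t : EReal) * F z₁ + ((1 - t : ℝ) : EReal) * F z₂)
      ∧ (∀ z ∈ h '' X, F z < ⊤)
      ∧ (∀ z ∈ C, z ∉ closure (h '' X) → F z = ⊤) := by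
  classical
  set g : (Fin k → ℝ) → (Fin k → ℝ) → V → ℝ :=
    fun ν z x => f x z + ∑ i, ν i * (h x i - z i) with hg
  set I : (Fin k → ℝ) → (Fin k → ℝ) → EReal :=
    fun ν z => ⨅ x ∈ X, ((g ν z x : ℝ) : EReal) with hIdef
  -- basic facts about `I`
  have hIle : ∀ ν z, ∀ x ∈ X, I ν z ≤ ((g ν z x : ℝ) : EReal) := by
    intro ν z x hx
    exact iInf₂_le x hx
  have hIbot : ∀ ν, ∀ z ∈ C, (⊥ : EReal) < I ν z := fun ν z hz => hSlater ν z hz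
  have hItop : ∀ ν z, I ν z < ⊤ := by
    intro ν z
    obtain ⟨x₀, hx₀⟩ := hXne
    exact lt_of_le_of_lt (hIle ν z x₀ hx₀) (EReal.coe_lt_top _)
  have hIreal : ∀ ν, ∀ z ∈ C, ∃ m : ℝ, I ν z = (m : EReal) := by
    intro ν z hz
    exact ⟨(I ν z).toReal, (EReal.coe_toReal (hItop ν z).ne (hIbot ν z hz).ne').symm⟩
  -- F is never ⊥
  have hFbot : ∀ z, F z ≠ ⊥ := by
    intro z
    by_cases hz : z ∈ C
    · rw [hF1 z hz]
      intro hcon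
      have := le_iSup (fun ν => I ν z) 0
      rw [hcon] at this
      exact absurd (le_bot_iff.1 this) (hIbot 0 z hz).ne'
    · rw [hF2 z hz]; exact top_ne_bot
  -- key convexity estimate for `I`
  have hkey : ∀ ν : Fin k → ℝ, ∀ z₁ ∈ C, ∀ z₂ ∈ C, ∀ t : ℝ, 0 ≤ t → t ≤ 1 →
      I ν (t • z₁ + (1 - t) • z₂) ≤
        (t : EReal) * I ν z₁ + ((1 - t : ℝ) : EReal) * I ν z₂ := by
    intro ν z₁ hz₁ z₂ hz₂ t ht0 ht1
    have hzC : t • z₁ + (1 - t) • z₂ ∈ C := hCconv hz₁ hz₂ ht0 (by linarith) (by ring)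
    obtain ⟨m₁, hm₁⟩ := hIreal ν z₁ hz₁
    obtain ⟨m₂, hm₂⟩ := hIreal ν z₂ hz₂
    obtain ⟨m, hm⟩ := hIreal ν _ hzC
    rw [hm₁, hm₂, hm, ← EReal.coe_mul, ← EReal.coe_mul, ← EReal.coe_add,
      EReal.coe_le_coe_iff]
    refine le_of_forall_pos_le_add ?_
    intro ε hε
    -- pick near-optimal points
    have h1 : I ν z₁ < ((m₁ + ε : ℝ) : EReal) := by
      rw [hm₁]; exact_mod_cast by linarith
    have h2 : I ν z₂ < ((m₂ + ε : ℝ) : EReal) := by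
      rw [hm₂]; exact_mod_cast by linarith
    rw [hIdef] at h1 h2
    simp only [iInf_lt_iff] at h1 h2
    obtain ⟨x₁, hx₁, hgx₁⟩ := h1
    obtain ⟨x₂, hx₂, hgx₂⟩ := h2
    rw [EReal.coe_lt_coe_iff] at hgx₁ hgx₂
    have hxX : t • x₁ + (1 - t) • x₂ ∈ X := hXconv hx₁ hx₂ ht0 (by linarith) (by ring)
    have hmle : m ≤ g ν (t • z₁ + (1 - t) • z₂) (t • x₁ + (1 - t) • x₂) := by
      have := hIle ν (t • z₁ + (1 - t) • z₂) _ hxX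
      rw [hm, EReal.coe_le_coe_iff] at this
      exact this
    -- linear part
    have hlin : ∑ i, ν i * (h (t • x₁ + (1 - t) • x₂) i - (t • z₁ + (1 - t) • z₂) i)
        = t * (∑ i, ν i * (h x₁ i - z₁ i)) + (1 - t) * (∑ i, ν i * (h x₂ i - z₂ i)) := by
      rw [Finset.mul_sum, Finset.mul_sum, ← Finset.sum_add_distrib]
      refine Finset.sum_congr rfl fun i _ => ?_
      have hx : h (t • x₁ + (1 - t) • x₂) i = t * h x₁ i + (1 - t) * h x₂ i := by
        simp [map_add, map_smul]
      have hzz : (t • z₁ + (1 - t) • z₂) i = t * z₁ i + (1 - t) * z₂ i := by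
        simp [Pi.add_apply, Pi.smul_apply, smul_eq_mul]
      rw [hx, hzz]; ring
    have hfle := hf x₁ hx₁ x₂ hx₂ z₁ hz₁ z₂ hz₂ t ht0 ht1
    have : g ν (t • z₁ + (1 - t) • z₂) (t • x₁ + (1 - t) • x₂)
        ≤ t * g ν z₁ x₁ + (1 - t) * g ν z₂ x₂ := by
      rw [hg]; simp only; rw [hlin]; nlinarith [hfle]
    nlinarith [hmle, this, hgx₁.le, hgx₂.le]
  have hmulbot : ∀ s : ℝ, 0 < s → ∀ z, ((s : EReal) * F z ≠ ⊥) := by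
    intro s hs z
    have hb := hFbot z
    obtain ⟨w, hw⟩ : ∃ w, F z = w := ⟨_, rfl⟩
    rw [hw] at hb ⊢
    induction w using EReal.rec with
    | bot => exact absurd rfl hb
    | coe r => rw [← EReal.coe_mul]; exact EReal.coe_ne_bot _
    | top =>
        rw [EReal.mul_top_of_pos (show (0 : EReal) < (s : ℝ) by exact_mod_cast hs)]
        exact top_ne_bot
  refine ⟨?_, ?_, ?_⟩
  · -- convexity of F
    intro z₁ z₂ t ht0 ht1
    rcases eq_or_lt_of_le ht0 with rfl | ht0'
    · simp
    rcases eq_or_lt_of_le ht1 with rfl | ht1'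
    · simp
    have htE : (0 : EReal) < (t : EReal) := by exact_mod_cast ht0'
    have ht1E : (0 : EReal) < ((1 - t : ℝ) : EReal) := by
      have : (0:ℝ) < 1 - t := by linarith
      exact_mod_cast this
    by_cases hz₁ : z₁ ∈ C
    · by_cases hz₂ : z₂ ∈ C
      · -- main case
        have hzC : t • z₁ + (1 - t) • z₂ ∈ C := hCconv hz₁ hz₂ ht0 (by linarith) (by ring)
        rw [hF1 _ hzC, hF1 _ hz₁, hF1 _ hz₂]
        refine iSup_le fun ν => le_trans (hkey ν z₁ hz₁ z₂ hz₂ t ht0 ht1) ?_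
        gcongr
        · exact le_iSup (fun ν => I ν z₁) ν
        · exact le_iSup (fun ν => I ν z₂) ν
      · rw [hF2 z₂ hz₂, EReal.mul_top_of_pos ht1E, EReal.add_top_of_ne_bot (hmulbot t ht0' z₁)]
        exact le_top
    · rw [hF2 z₁ hz₁, EReal.mul_top_of_pos htE,
        EReal.top_add_of_ne_bot (hmulbot (1 - t) (by linarith) z₂)]
      exact le_top
  · -- finiteness on h '' X
    rintro z ⟨x₀, hx₀, rfl⟩
    have hzC : h x₀ ∈ C := hhX ⟨x₀, hx₀, rfl⟩
    rw [hF1 _ hzC]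
    refine lt_of_le_of_lt (iSup_le fun ν => ?_) (EReal.coe_lt_top (f x₀ (h x₀)))
    refine le_trans (hIle ν (h x₀) x₀ hx₀) ?_
    rw [EReal.coe_le_coe_iff, hg]
    simp
  · -- F = ⊤ outside the closure of h '' X
    intro z hzC hznot
    obtain ⟨φ, u, hu1, hu2⟩ := geometric_hahn_banach_point_closed
      ((hXconv.linear_image h).closure) isClosed_closure hznot
    set ν : Fin k → ℝ := fun i => φ (fun j => if i = j then 1 else 0) with hν
    have hφ : ∀ w : Fin k → ℝ, φ w = ∑ i, w i * ν i := by
      intro w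
      have := LinearMap.pi_apply_eq_sum_univ (φ : (Fin k → ℝ) →ₗ[ℝ] ℝ) w
      simpa [smul_eq_mul, hν] using this
    set δ : ℝ := u - φ z with hδ
    have hδpos : 0 < δ := by simp [hδ]; linarith
    have hS : ∀ x ∈ X, δ ≤ ∑ i, ν i * (h x i - z i) := by
      intro x hx
      have hmem : h x ∈ closure (h '' X) := subset_closure ⟨x, hx, rfl⟩
      have := hu2 (h x) hmem
      have heq : ∑ i, ν i * (h x i - z i) = φ (h x) - φ z := by
        rw [← map_sub, hφ]
        refine Finset.sum_congr rfl fun i _ => ?_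
        simp [Pi.sub_apply, mul_comm]
      rw [heq]; linarith
    obtain ⟨m₁, hm₁⟩ := hIreal ν z hzC
    have hlarge : ∀ c : ℝ, 1 ≤ c → ((m₁ + (c - 1) * δ : ℝ) : EReal) ≤ I (c • ν) z := by
      intro c hc
      refine le_iInf₂ fun x hx => ?_
      rw [EReal.coe_le_coe_iff]
      have hgx : m₁ ≤ g ν z x := by
        have := hIle ν z x hx
        rw [hm₁, EReal.coe_le_coe_iff] at this
        exact this
      have hSx := hS x hx
      have hsum : g (c • ν) z x = g ν z x + (c - 1) * ∑ i, ν i * (h x i - z i) := by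
        have hss : ∑ i, c * ν i * (h x i - z i)
            = ∑ i, ν i * (h x i - z i) + (c - 1) * ∑ i, ν i * (h x i - z i) := by
          rw [Finset.mul_sum, ← Finset.sum_add_distrib]
          exact Finset.sum_congr rfl fun i _ => by ring
        simp only [hg, Pi.smul_apply, smul_eq_mul]
        rw [hss]; ring
      rw [hsum]
      nlinarith
    rw [hF1 z hzC]
    by_contra hne
    have hsup_bot : (⊥ : EReal) < ⨆ ν' : Fin k → ℝ, I ν' z :=
      lt_of_lt_of_le (hIbot ν z hzC) (le_iSup (fun ν' => I ν' z) ν)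
    set M : ℝ := (⨆ ν' : Fin k → ℝ, I ν' z).toReal with hM
    have hMeq : ((M : ℝ) : EReal) = ⨆ ν' : Fin k → ℝ, I ν' z :=
      EReal.coe_toReal hne hsup_bot.ne'
    set c : ℝ := max 1 (1 + (M - m₁ + 1) / δ) with hc
    have hc1 : 1 ≤ c := le_max_left _ _
    have hcle := hlarge c hc1
    have hle : ((m₁ + (c - 1) * δ : ℝ) : EReal) ≤ ((M : ℝ) : EReal) := by
      rw [hMeq]
      exact le_trans hcle (le_iSup (fun ν' => I ν' z) (c • ν))
    rw [EReal.coe_le_coe_iff] at hle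
    have hc2 : 1 + (M - m₁ + 1) / δ ≤ c := le_max_right _ _
    have hdiv : (M - m₁ + 1) / δ ≤ c - 1 := by linarith
    have := (div_le_iff₀ hδpos).1 hdiv
    linarith
end
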